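/- arXiv:hep-th/9502068 — 2 statements merged into one kernel-verified Lean document; each statement's English description precedes it below -/
import Mathlib

section
/- The vectors A_{ij}^{(n)} = tⁿE_{ij} + (-1)^{i+j+1+nN} t^{-n}E_{ji} for 1 ≤ i < j ≤ N, n ∈ Z, together with G_i^{(n)} = tⁿH_i + (-1)^{nN+1} t^{-n}H_i for 1 ≤ i ≤ N-1, n ≥ 1, form a basis of the fixed-point subalgebra Ã_N of ω in L(sl(N)). -/
noncomputable section
open Matrix LaurentPolynomial

attribute [local instance] LieRing.ofAssociativeRing

/-- The (gl) loop algebra: matrices over Laurent polynomials. -/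
abbrev gl (N : ℕ) := Matrix (Fin N) (Fin N) (LaurentPolynomial ℂ)

/-- The traceless part: the `sl(N)` loop algebra, as a Lie subalgebra over ℂ. -/
def slC (N : ℕ) : LieSubalgebra ℂ (gl N) where
  carrier := {A | Matrix.trace A = 0}
  add_mem' := by
    intro a b ha hb
    simp only [Set.mem_setOf_eq] at *
    rw [Matrix.trace_add, ha, hb, add_zero]
  zero_mem' := by simp
  smul_mem' := by
    intro c A hA
    simp only [Set.mem_setOf_eq] at *
    rw [Matrix.trace_smul, hA, smul_zero]
  lie_mem' := by
    intro x y hx hy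
    simp only [Set.mem_setOf_eq] at *
    rw [Ring.lie_def, Matrix.trace_sub, Matrix.trace_mul_comm, sub_self]

/-- Basis element `tⁿ E_{ij}` (for `i ≠ j`) of the `sl(N)` loop algebra. -/
def TE (N : ℕ) (n : ℤ) (i j : Fin N) (h : i ≠ j) : slC N :=
  ⟨(T n : LaurentPolynomial ℂ) • Matrix.single i j (1 : LaurentPolynomial ℂ), by
    show Matrix.trace _ = 0
    rw [Matrix.trace_smul, Matrix.trace_single_eq_of_ne i j _ h, smul_zero]⟩

/-- Basis element `tⁿ H_k = tⁿ (E_{kk} - E_{k+1,k+1})` of the `sl(N)` loop algebra. -/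
def TH (N : ℕ) (n : ℤ) (k : Fin N) (hk : (k : ℕ) + 1 < N) : slC N :=
  ⟨(T n : LaurentPolynomial ℂ) • (Matrix.single k k (1 : LaurentPolynomial ℂ)
      - Matrix.single (⟨(k : ℕ) + 1, hk⟩ : Fin N) (⟨(k : ℕ) + 1, hk⟩ : Fin N) 1), by
    show Matrix.trace _ = 0
    rw [Matrix.trace_smul, Matrix.trace_sub, Matrix.trace_single_eq_same,
      Matrix.trace_single_eq_same, sub_self, smul_zero]⟩


/-- The fixed vector `A_{ij}^{(n)} = tⁿE_{ij} + (-1)^{i+j+1+nN} t^{-n}E_{ji}`. -/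
def Abasis (N : ℕ) (n : ℤ) (i j : Fin N) (h : i ≠ j) : ↥(slC N) :=
  TE N n i j h
    + (((-1 : ℂ) ^ ((i : ℕ) + (j : ℕ) + 1)) * ((-1 : ℂ) ^ (n * (N : ℤ)))) • TE N (-n) j i h.symm

/-- The fixed vector `G_k^{(n)} = tⁿH_k + (-1)^{nN+1} t^{-n}H_k`. -/
def Gbasis (N : ℕ) (n : ℤ) (k : Fin N) (hk : (k : ℕ) + 1 < N) : ↥(slC N) :=
  TH N n k hk - ((-1 : ℂ) ^ (n * (N : ℤ))) • TH N (-n) k hk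

/-- coefficient functional on Laurent polynomials -/
def Lcoeff (n : ℤ) : LaurentPolynomial ℂ →ₗ[ℂ] ℂ where
  toFun p := p.coeff n
  map_add' _ _ := rfl
  map_smul' _ _ := rfl

@[simp] lemma Lcoeff_T (n m : ℤ) : Lcoeff n (T m) = if m = n then 1 else 0 := by
  show (Finsupp.single m (1:ℂ)) n = _
  exact Finsupp.single_apply

def coeffE (N : ℕ) (i j : Fin N) (n : ℤ) : ↥(slC N) →ₗ[ℂ] ℂ where
  toFun x := Lcoeff n (x.val i j)
  map_add' x y := by
    show Lcoeff n (((x : gl N) + (y : gl N)) i j) = _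
    rw [Matrix.add_apply, map_add]
  map_smul' c x := by
    show Lcoeff n ((c • (x : gl N)) i j) = _
    rw [Matrix.smul_apply, _root_.map_smul]
    rfl

@[simp] lemma coeffE_apply (N : ℕ) (i j : Fin N) (n : ℤ) (x : ↥(slC N)) :
    coeffE N i j n x = Lcoeff n (x.val i j) := rfl

lemma stdB_apply {N : ℕ} (i j i' j' : Fin N) (a : LaurentPolynomial ℂ) :
    Matrix.single i j a i' j' = if i = i' ∧ j = j' then a else 0 := rfl

lemma coeffE_TE {N : ℕ} (i j : Fin N) (n m : ℤ) (a b : Fin N) (h : a ≠ b) :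
    coeffE N i j n (TE N m a b h) = if a = i ∧ b = j ∧ m = n then 1 else 0 := by
  rw [coeffE_apply]
  show Lcoeff n ((T m • Matrix.single a b (1 : LaurentPolynomial ℂ)) i j) = _
  rw [Matrix.smul_apply, stdB_apply]
  by_cases hab : a = i ∧ b = j
  · simp [hab, smul_eq_mul]
  · rw [if_neg hab, if_neg (by tauto), smul_zero]
    rfl

lemma coeffE_TH {N : ℕ} (i j : Fin N) (n m : ℤ) (k : Fin N) (hk : (k : ℕ) + 1 < N) :
    coeffE N i j n (TH N m k hk) = (if m = n then 1 else 0) *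
      ((if k = i ∧ k = j then 1 else 0)
        - (if (⟨(k : ℕ) + 1, hk⟩ : Fin N) = i ∧ (⟨(k : ℕ) + 1, hk⟩ : Fin N) = j then 1 else 0)) := by
  rw [coeffE_apply]
  show Lcoeff n ((T m • (Matrix.single k k (1 : LaurentPolynomial ℂ)
      - Matrix.single (⟨(k : ℕ) + 1, hk⟩ : Fin N) (⟨(k : ℕ) + 1, hk⟩ : Fin N) 1) : gl N) i j) = _
  rw [Matrix.smul_apply, Matrix.sub_apply, stdB_apply, stdB_apply]
  rw [smul_eq_mul, mul_sub]
  split_ifs <;> simp_all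

lemma sgn_mul_sgn_neg (z : ℤ) : (-1:ℂ)^z * (-1:ℂ)^(-z) = 1 := by
  rw [← zpow_add₀ (by norm_num : (-1:ℂ) ≠ 0)]
  simp

lemma par_mul_par (a b : ℕ) : (-1:ℂ)^(a + b + 1) * (-1:ℂ)^(b + a + 1) = 1 := by
  rw [add_comm b a, ← pow_add]
  exact Even.neg_one_pow ⟨a + b + 1, by ring⟩

lemma coeffE_A_lt {N : ℕ} (i j : Fin N) (hij : i < j) (n m : ℤ) (a b : Fin N) (hab : a < b) :
    coeffE N i j n (Abasis N m a b hab.ne) = if a = i ∧ b = j ∧ m = n then 1 else 0 := by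
  rw [Abasis, map_add, _root_.map_smul, coeffE_TE, coeffE_TE]
  have : ¬(b = i ∧ a = j ∧ -m = n) := by
    rintro ⟨rfl, rfl, -⟩
    exact absurd (hab.trans hij) (lt_irrefl _)
  rw [if_neg this, smul_zero, add_zero]

lemma coeffE_A_diag {N : ℕ} (i : Fin N) (n m : ℤ) (a b : Fin N) (h : a ≠ b) :
    coeffE N i i n (Abasis N m a b h) = 0 := by
  rw [Abasis, map_add, _root_.map_smul, coeffE_TE, coeffE_TE]
  rw [if_neg (by rintro ⟨rfl, rfl, -⟩; exact h rfl), if_neg (by rintro ⟨rfl, rfl, -⟩; exact h rfl),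
    smul_zero, add_zero]

lemma coeffE_G_offdiag {N : ℕ} (i j : Fin N) (hij : i ≠ j) (n m : ℤ) (k : Fin N)
    (hk : (k : ℕ) + 1 < N) : coeffE N i j n (Gbasis N m k hk) = 0 := by
  rw [Gbasis, map_sub, _root_.map_smul, coeffE_TH, coeffE_TH]
  have hc : ¬(k = i ∧ k = j) := fun h => hij (h.1.symm.trans h.2)
  have hc' : ¬((⟨(k : ℕ) + 1, hk⟩ : Fin N) = i ∧ (⟨(k : ℕ) + 1, hk⟩ : Fin N) = j) :=
    fun h => hij (h.1.symm.trans h.2)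
  rw [if_neg hc, if_neg hc']
  simp

lemma sum_coeffE_G {N : ℕ} (k : Fin N) (n m : ℤ) (hn : 1 ≤ n) (hm : 1 ≤ m) (k' : Fin N)
    (hk' : (k' : ℕ) + 1 < N) :
    (∑ j ∈ Finset.univ.filter (fun j => j ≤ k), coeffE N j j n (Gbasis N m k' hk'))
      = if k' = k ∧ m = n then 1 else 0 := by
  have hmn : ¬(-m = n) := by omega
  have e1 : ∀ j : Fin N, coeffE N j j n (Gbasis N m k' hk')
      = (if m = n then 1 else 0) *
        ((if k' = j then 1 else 0) - (if (⟨(k' : ℕ) + 1, hk'⟩ : Fin N) = j then 1 else 0)) := by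
    intro j
    rw [Gbasis, map_sub, _root_.map_smul, coeffE_TH, coeffE_TH, if_neg hmn, zero_mul, smul_zero,
      sub_zero]
    simp only [and_self]
  simp only [e1, ← Finset.mul_sum, Finset.sum_sub_distrib, Finset.sum_ite_eq,
    Finset.mem_filter, Finset.mem_univ, true_and]
  clear e1
  simp only [Fin.le_def, Fin.ext_iff]
  split_ifs <;> simp_all <;> omega

lemma sum_coeffE_A {N : ℕ} (k : Fin N) (n m : ℤ) (a b : Fin N) (h : a ≠ b) :
    (∑ j ∈ Finset.univ.filter (fun j => j ≤ k), coeffE N j j n (Abasis N m a b h)) = 0 := by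
  apply Finset.sum_eq_zero
  intro j _
  exact coeffE_A_diag j n m a b h

/-- The index set for the claimed basis of the fixed-point subalgebra: pairs `(n, (i,j))` with
`i < j` and `n ∈ ℤ`, together with pairs `(n, k)` with `n ≥ 1` and `1 ≤ k ≤ N-1`. -/
def BIdx (N : ℕ) :=
  (ℤ × {p : Fin N × Fin N // p.1 < p.2}) ⊕ ({n : ℤ // 1 ≤ n} × {k : Fin N // (k : ℕ) + 1 < N})

/-- The claimed basis vectors `A_{ij}^{(n)}` and `G_k^{(n)}` of the fixed-point subalgebra. -/
def bvec (N : ℕ) : BIdx N → ↥(slC N)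
  | .inl (n, ⟨(i, j), hij⟩) => Abasis N n i j (ne_of_lt hij)
  | .inr (⟨n, _⟩, ⟨k, hk⟩) => Gbasis N n k hk

lemma sum_pick {α : Type*} [DecidableEq α] (l : α →₀ ℂ) (v₀ : α) (f : α → ℂ)
    (hf : ∀ v, f v = if v = v₀ then 1 else 0) :
    (l.sum fun v c => c * f v) = l v₀ := by
  rw [Finsupp.sum_congr (g2 := fun v c => if v = v₀ then c else 0)
    (fun v _ => by rw [hf]; by_cases hv : v = v₀ <;> simp [hv])]
  rw [Finsupp.sum_ite_eq' l v₀ (fun _ c => c)]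
  split_ifs with h
  · rfl
  · exact (Finsupp.notMem_support_iff.mp h).symm

/-- applying a linear functional to a `linearCombination` -/
lemma apply_lincomb {M : Type*} [AddCommGroup M] [Module ℂ M] {ι : Type*} [DecidableEq ι]
    (F : M →ₗ[ℂ] ℂ) (v : ι → M) (l : ι →₀ ℂ) (v₀ : ι)
    (hF : ∀ i, F (v i) = if i = v₀ then 1 else 0)
    (hl : Finsupp.linearCombination ℂ v l = 0) : l v₀ = 0 := by
  have h0 := congrArg F hl
  rw [map_zero, Finsupp.linearCombination_apply, map_finsuppSum] at h0
  rw [show (fun (a : ι) (b : ℂ) => F (b • v a)) = fun a b => b * F (v a) from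
    funext fun a => funext fun b => by rw [_root_.map_smul, smul_eq_mul]] at h0
  rw [sum_pick l v₀ _ hF] at h0
  exact h0

lemma bvec_indep (N : ℕ) : LinearIndependent ℂ (bvec N) := by
  classical
  rw [linearIndependent_iff]
  intro l hl
  have step1 : ∀ (n : ℤ) (p : {p : Fin N × Fin N // p.1 < p.2}),
      l (.inl (n, p)) = 0 := by
    rintro n ⟨⟨i, j⟩, hij⟩
    refine apply_lincomb (coeffE N i j n) (bvec N) l _ ?_ hl
    rintro (⟨m, ⟨⟨a, b⟩, hab⟩⟩ | ⟨⟨m, hm⟩, ⟨k, hk⟩⟩)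
    · rw [show bvec N (.inl (m, ⟨(a, b), hab⟩)) = Abasis N m a b hab.ne from rfl,
        coeffE_A_lt i j hij n m a b hab]
      have hc : ((Sum.inl (m, ⟨(a, b), hab⟩) : BIdx N) = Sum.inl (n, ⟨(i, j), hij⟩))
          ↔ (a = i ∧ b = j ∧ m = n) := by
        simp only [Sum.inl.injEq, Prod.mk.injEq, Subtype.mk.injEq]
        tauto
      exact if_congr hc.symm rfl rfl
    · rw [show bvec N (.inr (⟨m, hm⟩, ⟨k, hk⟩)) = Gbasis N m k hk from rfl,
        coeffE_G_offdiag i j hij.ne n m k hk, if_neg (by simp)]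
  have step2 : ∀ (q : {n : ℤ // 1 ≤ n} × {k : Fin N // (k : ℕ) + 1 < N}),
      l (.inr q) = 0 := by
    rintro ⟨⟨n, hn⟩, ⟨k, hk⟩⟩
    refine apply_lincomb (∑ j ∈ Finset.univ.filter (fun j => j ≤ k), coeffE N j j n)
      (bvec N) l _ ?_ hl
    rintro (⟨m, ⟨⟨a, b⟩, hab⟩⟩ | ⟨⟨m, hm⟩, ⟨k', hk'⟩⟩)
    · rw [show bvec N (.inl (m, ⟨(a, b), hab⟩)) = Abasis N m a b hab.ne from rfl,
        LinearMap.sum_apply, sum_coeffE_A k n m a b hab.ne, if_neg (by simp)]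
    · rw [show bvec N (.inr (⟨m, hm⟩, ⟨k', hk'⟩)) = Gbasis N m k' hk' from rfl,
        LinearMap.sum_apply, sum_coeffE_G k n m hn hm k' hk']
      have hc : ((Sum.inr (⟨m, hm⟩, ⟨k', hk'⟩) : BIdx N) = Sum.inr (⟨n, hn⟩, ⟨k, hk⟩))
          ↔ (k' = k ∧ m = n) := by
        simp only [Sum.inr.injEq, Prod.mk.injEq, Subtype.mk.injEq]
        tauto
      exact if_congr hc.symm rfl rfl
  ext v
  rcases v with ⟨n, p⟩ | q
  · exact step1 n p
  · exact step2 q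

/-- the inclusion as a linear map -/
def valMap (N : ℕ) : ↥(slC N) →ₗ[ℂ] gl N where
  toFun := Subtype.val
  map_add' _ _ := rfl
  map_smul' _ _ := rfl

def uvec (N : ℕ) :
    (ℤ × {p : Fin N × Fin N // p.1 ≠ p.2}) ⊕ (ℤ × {k : Fin N // (k : ℕ) + 1 < N}) → ↥(slC N)
  | .inl (n, ⟨(i, j), h⟩) => TE N n i j h
  | .inr (n, ⟨k, hk⟩) => TH N n k hk

lemma T_span : Submodule.span ℂ (Set.range (T : ℤ → LaurentPolynomial ℂ)) = ⊤ := by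
  rw [eq_top_iff]
  rintro p -
  have key : ∀ (n : ℤ) (c : ℂ), AddMonoidAlgebra.single n c = c • (T n : LaurentPolynomial ℂ) := by
    intro n c
    show AddMonoidAlgebra.single n c = c • AddMonoidAlgebra.single n (1 : ℂ)
    rw [AddMonoidAlgebra.smul_single', mul_one]
  have hp : p = p.coeff.sum fun n c => c • (T n : LaurentPolynomial ℂ) := by
    calc p = p.coeff.sum AddMonoidAlgebra.single := (AddMonoidAlgebra.sum_coeff_single _).symm
    _ = p.coeff.sum fun n c => c • (T n : LaurentPolynomial ℂ) :=
        Finsupp.sum_congr fun n _ => key n _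
  rw [hp]
  exact Submodule.finsuppSum_mem ℂ _ p.coeff _ fun n _ =>
    Submodule.smul_mem _ _ (Submodule.subset_span (Set.mem_range_self n))

lemma smul_mem_span {N : ℕ} (A : gl N) (S : Set (gl N))
    (h : ∀ n : ℤ, (T n : LaurentPolynomial ℂ) • A ∈ Submodule.span ℂ S)
    (p : LaurentPolynomial ℂ) : p • A ∈ Submodule.span ℂ S := by
  let f : LaurentPolynomial ℂ →ₗ[ℂ] gl N :=
    { toFun := (· • A), map_add' := fun p q => add_smul p q A,
      map_smul' := fun c p => smul_assoc c p A }
  have hp : p ∈ Submodule.span ℂ (Set.range (T : ℤ → LaurentPolynomial ℂ)) := by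
    rw [T_span]; trivial
  have hle : Submodule.span ℂ (Set.range (T : ℤ → LaurentPolynomial ℂ))
      ≤ Submodule.comap f (Submodule.span ℂ S) :=
    Submodule.span_le.mpr (by rintro _ ⟨n, rfl⟩; exact h n)
  exact hle hp

lemma traceless_mem {N : ℕ} (hN : 0 < N) (M : gl N) (hM : Matrix.trace M = 0) :
    M ∈ Submodule.span ℂ (Set.range (fun v => valMap N (uvec N v))) := by
  classical
  set S := Set.range (fun v => valMap N (uvec N v)) with hS
  set z : Fin N := ⟨0, hN⟩ with hz
  have hE : ∀ (p : LaurentPolynomial ℂ) (i j : Fin N) (hij : i ≠ j),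
      p • Matrix.single i j (1 : LaurentPolynomial ℂ) ∈ Submodule.span ℂ S :=
    fun p i j hij => smul_mem_span _ _
      (fun n => Submodule.subset_span (by exact ⟨.inl (n, ⟨(i, j), hij⟩), rfl⟩)) p
  have hH : ∀ (p : LaurentPolynomial ℂ) (k : Fin N) (hk : (k : ℕ) + 1 < N),
      p • (Matrix.single k k (1 : LaurentPolynomial ℂ)
        - Matrix.single (⟨(k : ℕ) + 1, hk⟩ : Fin N) (⟨(k : ℕ) + 1, hk⟩ : Fin N) 1)
        ∈ Submodule.span ℂ S :=
    fun p k hk => smul_mem_span _ _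
      (fun n => Submodule.subset_span (by exact ⟨.inr (n, ⟨k, hk⟩), rfl⟩)) p
  have hD : ∀ (p : LaurentPolynomial ℂ) (i : Fin N),
      p • (Matrix.single i i (1 : LaurentPolynomial ℂ) - Matrix.single z z 1)
        ∈ Submodule.span ℂ S := by
    intro p i
    have key : ∀ (mv : ℕ) (hm : mv < N),
        p • (Matrix.single (⟨mv, hm⟩ : Fin N) (⟨mv, hm⟩ : Fin N) (1 : LaurentPolynomial ℂ)
          - Matrix.single z z 1) ∈ Submodule.span ℂ S := by
      intro mv
      induction mv with
      | zero =>
        intro hm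
        have : (⟨0, hm⟩ : Fin N) = z := rfl
        rw [this, sub_self, smul_zero]
        exact Submodule.zero_mem _
      | succ mv ih =>
        intro hm
        have h1 : mv < N := Nat.lt_of_succ_lt hm
        have e : Matrix.single (⟨mv + 1, hm⟩ : Fin N) (⟨mv + 1, hm⟩ : Fin N)
              (1 : LaurentPolynomial ℂ) - Matrix.single z z 1
            = (Matrix.single (⟨mv, h1⟩ : Fin N) (⟨mv, h1⟩ : Fin N) 1 - Matrix.single z z 1)
              - (Matrix.single (⟨mv, h1⟩ : Fin N) (⟨mv, h1⟩ : Fin N) 1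
                - Matrix.single (⟨mv + 1, hm⟩ : Fin N) (⟨mv + 1, hm⟩ : Fin N) 1) := by
          abel
        rw [e, smul_sub]
        exact sub_mem (ih h1) (hH p ⟨mv, h1⟩ hm)
    exact key i.1 i.2
  have hdecomp : M = ∑ i, ∑ j, (if i = j
      then M i i • (Matrix.single i i (1 : LaurentPolynomial ℂ) - Matrix.single z z 1)
      else M i j • Matrix.single i j 1) := by
    have h1 : ∀ i j : Fin N, (if i = j
        then M i i • (Matrix.single i i (1 : LaurentPolynomial ℂ) - Matrix.single z z 1)
        else M i j • Matrix.single i j 1)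
        = M i j • Matrix.single i j 1 - (if i = j then M i i • Matrix.single z z 1 else 0) := by
      intro i j
      split_ifs with h
      · subst h; rw [smul_sub]
      · rw [sub_zero]
    calc M = ∑ i, ∑ j, M i j • Matrix.single i j (1 : LaurentPolynomial ℂ) := by
          conv_lhs => rw [matrix_eq_sum_single M]
          exact Finset.sum_congr rfl fun i _ => Finset.sum_congr rfl fun j _ => by
            rw [smul_single, smul_eq_mul, mul_one]
    _ = ∑ i, ∑ j, ((if i = j
          then M i i • (Matrix.single i i (1 : LaurentPolynomial ℂ) - Matrix.single z z 1)
          else M i j • Matrix.single i j 1)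
        + (if i = j then M i i • Matrix.single z z 1 else 0)) := by
          exact Finset.sum_congr rfl fun i _ => Finset.sum_congr rfl fun j _ => by
            rw [h1]; abel
    _ = (∑ i, ∑ j, (if i = j
          then M i i • (Matrix.single i i (1 : LaurentPolynomial ℂ) - Matrix.single z z 1)
          else M i j • Matrix.single i j 1)) + ∑ i : Fin N, M i i • Matrix.single z z 1 := by
          simp only [Finset.sum_add_distrib]
          congr 1
          exact Finset.sum_congr rfl fun i _ => by
            rw [Finset.sum_ite_eq Finset.univ i (fun _ => M i i • Matrix.single z z 1),
              if_pos (Finset.mem_univ i)]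
    _ = ∑ i, ∑ j, (if i = j
          then M i i • (Matrix.single i i (1 : LaurentPolynomial ℂ) - Matrix.single z z 1)
          else M i j • Matrix.single i j 1) := by
          rw [← Finset.sum_smul, show ∑ i : Fin N, M i i = Matrix.trace M from rfl, hM,
            zero_smul, add_zero]
  rw [hdecomp]
  refine Submodule.sum_mem _ fun i _ => Submodule.sum_mem _ fun j _ => ?_
  by_cases h : i = j
  · rw [if_pos h]; subst h; exact hD _ i
  · rw [if_neg h]; exact hE _ i j h

lemma uvec_span (N : ℕ) (hN : 0 < N) : Submodule.span ℂ (Set.range (uvec N)) = ⊤ := by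
  rw [eq_top_iff]
  rintro x -
  have h1 : valMap N x ∈ Submodule.map (valMap N) (Submodule.span ℂ (Set.range (uvec N))) := by
    rw [Submodule.map_span, ← Set.range_comp]
    exact traceless_mem hN (x : gl N) x.2
  obtain ⟨y, hy, hxy⟩ := h1
  rwa [show y = x from Subtype.ext hxy] at hy

/-- The vectors `A_{ij}^{(n)}` (`1 ≤ i < j ≤ N`, `n ∈ ℤ`) together with
`G_k^{(n)}` (`1 ≤ k ≤ N-1`, `n ≥ 1`) form a basis of the fixed-point subalgebra `Ã_N`
of `ω`: they are linearly independent and span the fixed-point set of `ω`. -/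
theorem basis_of_fixed_point_subalgebra (N : ℕ) (hN : 2 ≤ N)
    (ω : ↥(slC N) →ₗ[ℂ] ↥(slC N))
    (hωE : ∀ (n : ℤ) (i j : Fin N) (h : i ≠ j),
      ω (TE N n i j h)
        = (((-1 : ℂ) ^ ((i : ℕ) + (j : ℕ) + 1)) * ((-1 : ℂ) ^ (n * (N : ℤ)))) •
            TE N (-n) j i h.symm)
    (hωH : ∀ (n : ℤ) (k : Fin N) (hk : (k : ℕ) + 1 < N),
      ω (TH N n k hk) = (-((-1 : ℂ) ^ (n * (N : ℤ)))) • TH N (-n) k hk)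
    :
    LinearIndependent ℂ (bvec N) ∧
    Submodule.span ℂ (Set.range (bvec N)) = LinearMap.ker (ω - LinearMap.id) := by
  refine ⟨bvec_indep N, le_antisymm ?_ ?_⟩
  · rw [Submodule.span_le]
    rintro _ ⟨v, rfl⟩
    rw [SetLike.mem_coe, LinearMap.mem_ker, LinearMap.sub_apply, LinearMap.id_apply, sub_eq_zero]
    rcases v with ⟨n, ⟨⟨i, j⟩, hij⟩⟩ | ⟨⟨n, hn⟩, ⟨k, hk⟩⟩
    · show ω (Abasis N n i j hij.ne) = Abasis N n i j hij.ne
      rw [Abasis, map_add, _root_.map_smul, hωE n i j hij.ne, hωE (-n) j i hij.ne.symm,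
        smul_smul, neg_neg]
      have hss : (((-1:ℂ) ^ ((i:ℕ) + (j:ℕ) + 1)) * ((-1:ℂ) ^ (n * (N:ℤ)))) *
          (((-1:ℂ) ^ ((j:ℕ) + (i:ℕ) + 1)) * ((-1:ℂ) ^ ((-n) * (N:ℤ)))) = 1 := by
        rw [mul_mul_mul_comm, par_mul_par, one_mul, neg_mul, sgn_mul_sgn_neg]
      rw [hss, one_smul, add_comm]
    · show ω (Gbasis N n k hk) = Gbasis N n k hk
      rw [Gbasis, map_sub, _root_.map_smul, hωH n k hk, hωH (-n) k hk, smul_smul, neg_neg]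
      have hss : ((-1:ℂ) ^ (n * (N:ℤ))) * (-((-1:ℂ) ^ ((-n) * (N:ℤ)))) = -1 := by
        rw [mul_neg, neg_mul, sgn_mul_sgn_neg]
      rw [hss, neg_one_smul, neg_smul]
      abel
  · intro x hx
    rw [LinearMap.mem_ker, LinearMap.sub_apply, LinearMap.id_apply, sub_eq_zero] at hx
    set L : ↥(slC N) →ₗ[ℂ] ↥(slC N) := (1/2 : ℂ) • (ω + LinearMap.id) with hL
    have hLx : L x = x := by
      rw [hL, LinearMap.smul_apply, LinearMap.add_apply, LinearMap.id_apply, hx,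
        ← two_smul ℂ x, smul_smul]
      norm_num
    have hx_top : x ∈ Submodule.span ℂ (Set.range (uvec N)) := by
      rw [uvec_span N (by omega)]; trivial
    have hcomap : Submodule.span ℂ (Set.range (uvec N))
        ≤ Submodule.comap L (Submodule.span ℂ (Set.range (bvec N))) := by
      rw [Submodule.span_le]
      rintro _ ⟨v, rfl⟩
      rw [SetLike.mem_coe, Submodule.mem_comap]
      rcases v with ⟨n, ⟨⟨i, j⟩, hij⟩⟩ | ⟨n, ⟨k, hk⟩⟩
      · show L (TE N n i j hij) ∈ _
        have hLTE : L (TE N n i j hij) = (1/2 : ℂ) • (TE N n i j hij +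
            (((-1:ℂ) ^ ((i:ℕ)+(j:ℕ)+1)) * ((-1:ℂ) ^ (n * (N:ℤ)))) • TE N (-n) j i hij.symm) := by
          rw [hL, LinearMap.smul_apply, LinearMap.add_apply, LinearMap.id_apply, hωE n i j hij,
            add_comm]
        rcases lt_or_gt_of_ne hij with h | h
        · rw [hLTE,
            show (TE N n i j hij + (((-1:ℂ) ^ ((i:ℕ)+(j:ℕ)+1)) * ((-1:ℂ) ^ (n * (N:ℤ)))) •
              TE N (-n) j i hij.symm) = Abasis N n i j hij from rfl]
          exact Submodule.smul_mem _ _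
            (Submodule.subset_span (by exact ⟨.inl (n, ⟨(i, j), h⟩), rfl⟩))
        · have hss : (((-1:ℂ)^((i:ℕ)+(j:ℕ)+1)) * ((-1:ℂ)^(n * (N:ℤ)))) *
              (((-1:ℂ)^((j:ℕ)+(i:ℕ)+1)) * ((-1:ℂ)^((-n) * (N:ℤ)))) = 1 := by
            rw [mul_mul_mul_comm, par_mul_par, one_mul, neg_mul, sgn_mul_sgn_neg]
          have hkey : L (TE N n i j hij)
              = ((1/2 : ℂ) * (((-1:ℂ)^((i:ℕ)+(j:ℕ)+1)) * ((-1:ℂ)^(n * (N:ℤ))))) •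
                Abasis N (-n) j i hij.symm := by
            rw [Abasis, neg_neg, smul_add, smul_smul, mul_assoc, hss, mul_one, hLTE,
              smul_add, smul_smul]
            abel
          rw [hkey]
          exact Submodule.smul_mem _ _
            (Submodule.subset_span (by exact ⟨.inl (-n, ⟨(j, i), h⟩), rfl⟩))
      · show L (TH N n k hk) ∈ _
        have hLTH : L (TH N n k hk) = (1/2 : ℂ) • (TH N n k hk
            - ((-1:ℂ)^(n * (N:ℤ))) • TH N (-n) k hk) := by
          rw [hL, LinearMap.smul_apply, LinearMap.add_apply, LinearMap.id_apply, hωH n k hk,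
            neg_smul, neg_add_eq_sub]
        rcases lt_trichotomy n 0 with h | h | h
        · have hn' : 1 ≤ -n := by omega
          have hss : ((-1:ℂ)^(n*(N:ℤ))) * ((-1:ℂ)^((-n)*(N:ℤ))) = 1 := by
            rw [neg_mul, sgn_mul_sgn_neg]
          have hkey : L (TH N n k hk)
              = (-((1/2:ℂ) * ((-1:ℂ)^(n*(N:ℤ))))) • Gbasis N (-n) k hk := by
            rw [Gbasis, neg_neg, smul_sub, smul_smul, neg_mul, mul_assoc, hss, mul_one,
              hLTH, smul_sub, smul_smul]
            module
          rw [hkey]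
          exact Submodule.smul_mem _ _
            (Submodule.subset_span (by exact ⟨.inr (⟨-n, hn'⟩, ⟨k, hk⟩), rfl⟩))
        · subst h
          have : L (TH N 0 k hk) = 0 := by
            rw [hLTH, zero_mul, zpow_zero, one_smul, neg_zero, sub_self, smul_zero]
          rw [this]
          exact Submodule.zero_mem _
        · have hn' : 1 ≤ n := h
          rw [hLTH, show TH N n k hk - ((-1:ℂ)^(n * (N:ℤ))) • TH N (-n) k hk
            = Gbasis N n k hk from rfl]
          exact Submodule.smul_mem _ _
            (Submodule.subset_span (by exact ⟨.inr (⟨n, hn'⟩, ⟨k, hk⟩), rfl⟩))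
    have hfin := hcomap hx_top
    rw [Submodule.mem_comap, hLx] at hfin
    exact hfin
end
end

section
/- Under the homomorphism π: A_N → L(sl(N)) sending e_i to ẽ_i (where ẽ_i = E_{i,i+1}+E_{i+1,i} for i < N and ẽ_N = tE_{N,1}+t⁻¹E_{1,N}), the image of the closed string S_i(Nm) is π(S_i(Nm)) = (t-(-1)^N t⁻¹)(t+(-1)^N t⁻¹)^{m-1}(E_{ii} - E_{i+1,i+1}) for all m ≥ 1 and 1 ≤ i ≤ N. In particular Σ_{i=1}^N π(S_i(Nm)) = 0. -/
noncomputable section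
open Matrix LaurentPolynomial
attribute [local instance 100] LieRing.ofAssociativeRing

noncomputable section

/-- The generalized Dolan–Grady relations for a cyclic family `e` of `N` elements. -/
def DolanGrady {N : ℕ} [NeZero N] {L : Type*} [LieRing L] (e : Fin N → L) : Prop :=
  (∀ i j : Fin N, (j = i + 1 ∨ i = j + 1) → ⁅e i, ⁅e i, e j⁆⁆ = e j) ∧
  (∀ i j : Fin N, i ≠ j → j ≠ i + 1 → i ≠ j + 1 → ⁅e i, e j⁆ = 0)

/-- The right-nested string `S_k(r) = [e_k,[e_{k+1},...,e_{k+r-1}]...]`, with `S _ 0 = 0`. -/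
def S {N : ℕ} [NeZero N] {L : Type*} [LieRing L] (e : Fin N → L) : ℕ → Fin N → L
  | 0, _ => 0
  | 1, k => e k
  | (r + 2), k => ⁅e k, S e (r + 1) (k + 1)⁆

/-- The set of defining relators of the `sl(N)` Onsager algebra inside the free Lie algebra. -/
def OnsRels (N : ℕ) [NeZero N] : Set (FreeLieAlgebra ℂ (Fin N)) :=
  {x | ∃ i j : Fin N, (j = i + 1 ∨ i = j + 1) ∧
      x = ⁅FreeLieAlgebra.of ℂ i, ⁅FreeLieAlgebra.of ℂ i, FreeLieAlgebra.of ℂ j⁆⁆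
            - FreeLieAlgebra.of ℂ j} ∪
  {x | ∃ i j : Fin N, i ≠ j ∧ j ≠ i + 1 ∧ i ≠ j + 1 ∧
      x = ⁅FreeLieAlgebra.of ℂ i, FreeLieAlgebra.of ℂ j⁆}

/-- The Lie ideal generated by the Onsager relators. -/
def OnsIdeal (N : ℕ) [NeZero N] : LieIdeal ℂ (FreeLieAlgebra ℂ (Fin N)) :=
  LieSubmodule.lieSpan ℂ _ (OnsRels N)

/-- The `sl(N)` Onsager algebra, presented by generators and relations. -/
abbrev OnsAlg (N : ℕ) [NeZero N] := FreeLieAlgebra ℂ (Fin N) ⧸ OnsIdeal N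

/-- The generators `e_i` of the `sl(N)` Onsager algebra. -/
def eGen (N : ℕ) [NeZero N] (i : Fin N) : OnsAlg N :=
  LieSubmodule.Quotient.mk (N := OnsIdeal N) (FreeLieAlgebra.of ℂ i)


/-- The elements `ẽ_i` of the loop algebra: `ẽ_i = E_{i,i+1} + E_{i+1,i}` for `1 ≤ i ≤ N-1`,
and `ẽ_N = t E_{N,1} + t⁻¹ E_{1,N}` (0-based indices, cyclic successor `i + 1` in `Fin N`). -/
def etil (N : ℕ) [NeZero N] (i : Fin N) : gl N :=
  (T (if (i : ℕ) + 1 = N then 1 else 0) : LaurentPolynomial ℂ) • Matrix.single i (i + 1) 1 +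
  (T (if (i : ℕ) + 1 = N then -1 else 0) : LaurentPolynomial ℂ) • Matrix.single (i + 1) i 1

open Fin.NatCast Fin.CommRing

-- auxiliary defs
def aexp (N : ℕ) (k : Fin N) : ℤ := if (k : ℕ) + 1 = N then 1 else 0
def bexp (N : ℕ) (k : Fin N) (s : ℕ) : ℤ := if N ≤ (k : ℕ) + s then 1 else 0
def coefC (N : ℕ) : ℕ → LaurentPolynomial ℂ
  | 0 => 1
  | m+1 => (T 1 - (-1 : LaurentPolynomial ℂ)^N * T (-1)) * (T 1 + (-1 : LaurentPolynomial ℂ)^N * T (-1))^m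
def sg : ℕ → LaurentPolynomial ℂ
  | 0 => -1
  | _+1 => 1

lemma etil_eq (N : ℕ) [NeZero N] (k : Fin N) :
    etil N k = (T (aexp N k) : LaurentPolynomial ℂ) • Matrix.single k (k+1) 1
      + (T (-aexp N k) : LaurentPolynomial ℂ) • Matrix.single (k+1) k 1 := by
  unfold etil aexp; split <;> norm_num

lemma bexp_one (N : ℕ) (k : Fin N) : bexp N k 1 = aexp N k := by
  unfold bexp aexp
  have := k.isLt
  by_cases h : (k:ℕ) + 1 = N <;> simp_all <;> omega

lemma val_add_one (N : ℕ) [NeZero N] (h3 : 3 ≤ N) (k : Fin N) :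
    ((k+1 : Fin N) : ℕ) = ((k:ℕ)+1) % N := by
  have : (k+1 : Fin N) = k + ((1:ℕ) : Fin N) := by norm_num
  rw [this, Fin.val_add, Fin.val_natCast]
  have h1 : (1:ℕ) % N = 1 := Nat.mod_eq_of_lt (by omega)
  rw [h1]

lemma bstep (N : ℕ) [NeZero N] (h3 : 3 ≤ N) (k : Fin N) {s : ℕ} (hs : s < N) :
    aexp N k + bexp N (k+1) s = bexp N k (s+1) := by
  unfold aexp bexp
  have hk := k.isLt
  have h1 := val_add_one N h3 k
  by_cases h : (k:ℕ) + 1 = N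
  · rw [h1, h, Nat.mod_self]
    split_ifs <;> omega
  · rw [h1, Nat.mod_eq_of_lt (by omega)]
    split_ifs <;> omega

lemma bNm1 (N : ℕ) [NeZero N] (h3 : 3 ≤ N) (k : Fin N) :
    aexp N k + bexp N (k+1) (N-1) = 1 := by
  unfold aexp bexp
  have hk := k.isLt
  have h1 := val_add_one N h3 k
  by_cases h : (k:ℕ) + 1 = N
  · rw [h1, h, Nat.mod_self]
    split_ifs <;> omega
  · rw [h1, Nat.mod_eq_of_lt (by omega)]
    split_ifs <;> omega

lemma fin_helper (N : ℕ) [NeZero N] (k : Fin N) {a b : ℕ} (h : a % N ≠ b % N) :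
    k + (a : Fin N) ≠ k + (b : Fin N) := by
  intro hh
  exact h (by simpa [Fin.val_natCast] using congrArg Fin.val (add_left_cancel hh))

lemma fin_k1_ne (N : ℕ) [NeZero N] (h3 : 3 ≤ N) (k : Fin N) : (k+1 : Fin N) ≠ k := by
  have := fin_helper N k (a := 1) (b := 0)
    (by rw [Nat.mod_eq_of_lt (by omega), Nat.zero_mod]; omega)
  simpa using this

lemma fin_k1_ne' (N : ℕ) [NeZero N] (h3 : 3 ≤ N) (k : Fin N) {s : ℕ} (hs : 2 ≤ s) (hsN : s < N) :
    (k+1 : Fin N) ≠ k + (s : Fin N) := by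
  have := fin_helper N k (a := 1) (b := s)
    (by rw [Nat.mod_eq_of_lt (by omega), Nat.mod_eq_of_lt hsN]; omega)
  simpa using this

lemma fin_k_ne (N : ℕ) [NeZero N] (k : Fin N) {s : ℕ} (hs : 1 ≤ s) (hsN : s < N) :
    k ≠ k + (s : Fin N) := by
  have := fin_helper N k (a := 0) (b := s)
    (by rw [Nat.zero_mod, Nat.mod_eq_of_lt hsN]; omega)
  simpa using this

lemma mul_of_ne' {N : ℕ} {j k : Fin N} (h : j ≠ k) (i l : Fin N)
    (c d : LaurentPolynomial ℂ) :
    Matrix.single i j c * Matrix.single k l d = 0 :=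
  Matrix.single_mul_single_of_ne _ _ _ _ h _

-- the three bracket computations
lemma lie_off (N : ℕ) [NeZero N] (i j w : Fin N) (hji : j ≠ i) (hjw : j ≠ w) (hiw : i ≠ w)
    (a : ℤ) (p q : LaurentPolynomial ℂ) :
    ⁅(T a : LaurentPolynomial ℂ) • Matrix.single i j (1 : LaurentPolynomial ℂ)
        + (T (-a) : LaurentPolynomial ℂ) • Matrix.single j i (1 : LaurentPolynomial ℂ),
      p • Matrix.single j w (1 : LaurentPolynomial ℂ)
        + q • Matrix.single w j (1 : LaurentPolynomial ℂ)⁆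
    = (T a * p) • Matrix.single i w (1 : LaurentPolynomial ℂ)
      - (T (-a) * q) • Matrix.single w i (1 : LaurentPolynomial ℂ) := by
  simp only [Ring.lie_def, add_mul, mul_add, smul_mul_assoc, mul_smul_comm, smul_smul,
    Matrix.single_mul_single_same, mul_of_ne' hjw, mul_of_ne' hji.symm,
    mul_of_ne' hiw, mul_of_ne' hiw.symm,
    mul_of_ne' hjw.symm, mul_of_ne' hji, mul_one, smul_zero]
  module

lemma lie_in (N : ℕ) [NeZero N] (i j : Fin N) (hij : i ≠ j) (a : ℤ) (p q : LaurentPolynomial ℂ) :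
    ⁅(T a : LaurentPolynomial ℂ) • Matrix.single i j (1 : LaurentPolynomial ℂ)
        + (T (-a) : LaurentPolynomial ℂ) • Matrix.single j i (1 : LaurentPolynomial ℂ),
      p • Matrix.single j i (1 : LaurentPolynomial ℂ)
        + q • Matrix.single i j (1 : LaurentPolynomial ℂ)⁆
    = (T a * p - T (-a) * q) • (Matrix.single i i (1 : LaurentPolynomial ℂ)
        - Matrix.single j j (1 : LaurentPolynomial ℂ)) := by
  simp only [Ring.lie_def, add_mul, mul_add, smul_mul_assoc, mul_smul_comm, smul_smul,
    Matrix.single_mul_single_same, mul_of_ne' hij, mul_of_ne' hij.symm, mul_one, smul_zero]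
  module

lemma lie_out (N : ℕ) [NeZero N] (i j l : Fin N) (hij : i ≠ j) (hil : i ≠ l) (hjl : j ≠ l)
    (a : ℤ) (c : LaurentPolynomial ℂ) :
    ⁅(T a : LaurentPolynomial ℂ) • Matrix.single i j (1 : LaurentPolynomial ℂ)
        + (T (-a) : LaurentPolynomial ℂ) • Matrix.single j i (1 : LaurentPolynomial ℂ),
      c • (Matrix.single j j (1 : LaurentPolynomial ℂ)
        - Matrix.single l l (1 : LaurentPolynomial ℂ))⁆
    = (T a * c) • Matrix.single i j (1 : LaurentPolynomial ℂ)
      - (T (-a) * c) • Matrix.single j i (1 : LaurentPolynomial ℂ) := by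
  simp only [Ring.lie_def, add_mul, mul_add, mul_sub, sub_mul, smul_mul_assoc, mul_smul_comm,
    smul_smul, smul_sub, Matrix.single_mul_single_same,
    mul_of_ne' hij, mul_of_ne' hij.symm, mul_of_ne' hil, mul_of_ne' hil.symm,
    mul_of_ne' hjl, mul_of_ne' hjl.symm, mul_one, smul_zero]
  module

lemma S_succ {N : ℕ} [NeZero N] {L : Type*} [LieRing L] (e : Fin N → L) (r : ℕ) (hr : 1 ≤ r)
    (k : Fin N) : S e (r+1) k = ⁅e k, S e r (k+1)⁆ := by
  obtain ⟨r', rfl⟩ : ∃ r', r = r' + 1 := ⟨r - 1, by omega⟩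
  rfl

lemma map_S {N : ℕ} [NeZero N] {L L' : Type*} [LieRing L] [LieRing L']
    [LieAlgebra ℂ L] [LieAlgebra ℂ L'] (f : L →ₗ⁅ℂ⁆ L') (e : Fin N → L) :
    ∀ (r : ℕ) (k : Fin N), f (S e r k) = S (fun i => f (e i)) r k := by
  intro r
  induction r using Nat.twoStepInduction with
  | zero => intro k; simp [S]
  | one => intro k; simp [S]
  | more n ih1 ih2 =>
    intro k
    rw [show n+2 = (n+1)+1 from rfl, S_succ e (n+1) (by omega) k,
      S_succ (fun i => f (e i)) (n+1) (by omega) k, LieHom.map_lie, ih2]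

def Fm (N : ℕ) [NeZero N] (r : ℕ) (k : Fin N) : gl N :=
  if r % N = 0 then
    coefC N (r / N) • (Matrix.single k k (1 : LaurentPolynomial ℂ)
      - Matrix.single (k+1) (k+1) (1 : LaurentPolynomial ℂ))
  else
    coefC N (r / N) •
      ((T (bexp N k (r % N)) : LaurentPolynomial ℂ)
          • Matrix.single k (k + ((r % N : ℕ) : Fin N)) (1 : LaurentPolynomial ℂ)
        + (sg (r / N) * (-1)^(r % N) * T (-(bexp N k (r % N))))
          • Matrix.single (k + ((r % N : ℕ) : Fin N)) k (1 : LaurentPolynomial ℂ))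

lemma lie_smul' {N : ℕ} (c : LaurentPolynomial ℂ) (x y : gl N) :
    ⁅x, c • y⁆ = c • ⁅x, y⁆ := by
  simp [Ring.lie_def, mul_smul_comm, smul_mul_assoc, smul_sub]

lemma Setil_eq (N : ℕ) [NeZero N] (h3 : 3 ≤ N) :
    ∀ r, 1 ≤ r → ∀ k : Fin N, S (etil N) r k = Fm N r k := by
  intro r
  induction r with
  | zero => omega
  | succ r ih =>
    intro _ k
    rcases Nat.eq_zero_or_pos r with rfl | hr
    · -- base case r+1 = 1
      have h1N : 1 % N = 1 := Nat.mod_eq_of_lt (by omega)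
      have h1dN : 1 / N = 0 := Nat.div_eq_of_lt (by omega)
      rw [show S (etil N) 1 k = etil N k from rfl]
      simp only [Fm]
      rw [if_neg (by rw [h1N]; omega), h1N, h1dN, etil_eq, show ((1:ℕ) : Fin N) = 1 from Nat.cast_one,
        bexp_one, show coefC N 0 = 1 from rfl, show sg 0 = -1 from rfl, pow_one, one_smul]
      module
    · -- inductive step
      rw [S_succ _ _ hr, ih hr (k+1)]
      obtain ⟨m, s, rfl, hsN⟩ : ∃ m s, r = N * m + s ∧ s < N :=
        ⟨r / N, r % N, (Nat.div_add_mod r N).symm, Nat.mod_lt _ (by omega)⟩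
      have hmod : (N * m + s) % N = s := by
        rw [Nat.mul_add_mod]; exact Nat.mod_eq_of_lt hsN
      have hdiv : (N * m + s) / N = m := by
        rw [Nat.mul_add_div (by omega), Nat.div_eq_of_lt hsN, Nat.add_zero]
      rcases Nat.eq_zero_or_pos s with rfl | hspos
      · -- case s = 0 : coming off the diagonal
        obtain _ | m := m
        · omega
        have e1 : (N * (m+1) + 0 + 1) % N = 1 := by
          rw [Nat.add_zero, Nat.mul_add_mod]; exact Nat.mod_eq_of_lt (by omega)
        have e2 : (N * (m+1) + 0 + 1) / N = m + 1 := by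
          rw [Nat.add_zero, Nat.mul_add_div (by omega), Nat.div_eq_of_lt (by omega), Nat.add_zero]
        simp only [Fm]
        rw [hmod, hdiv, e1, e2, if_pos rfl, if_neg (by omega)]
        rw [etil_eq]
        have hne1 : k ≠ k + 1 + 1 := by
          have h2 : ((2:ℕ) : Fin N) = 1 + 1 := by push_cast; ring
          have := fin_helper N k (a := 0) (b := 2)
            (by rw [Nat.zero_mod, Nat.mod_eq_of_lt (by omega)]; omega)
          rwa [Nat.cast_zero, add_zero, h2, ← add_assoc] at this
        have hne2 : (k + 1 : Fin N) ≠ k + 1 + 1 := (fin_k1_ne N h3 (k+1)).symm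
        rw [lie_out N k (k+1) (k+1+1) (fin_k1_ne N h3 k).symm hne1 hne2]
        rw [show ((1:ℕ) : Fin N) = 1 from Nat.cast_one, bexp_one,
          show sg (m+1) = 1 from rfl, pow_one]
        module
      · -- s ≥ 1
        have hTb : (T (aexp N k) : LaurentPolynomial ℂ) * T (bexp N (k+1) s)
            = T (bexp N k (s+1)) := by
          rw [← T_add, bstep N h3 k hsN]
        have hTb' : (T (-aexp N k) : LaurentPolynomial ℂ) * T (-(bexp N (k+1) s))
            = T (-(bexp N k (s+1))) := by
          rw [← T_add]
          congr 1
          have := bstep N h3 k hsN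
          omega
        rcases Nat.lt_or_ge (s+1) N with hsN1 | hsN1
        · -- middle case: s+1 < N
          have e1 : (N*m + s + 1) % N = s + 1 := by
            rw [Nat.add_assoc, Nat.mul_add_mod]; exact Nat.mod_eq_of_lt hsN1
          have e2 : (N*m + s + 1) / N = m := by
            rw [Nat.add_assoc, Nat.mul_add_div (by omega), Nat.div_eq_of_lt hsN1, Nat.add_zero]
          simp only [Fm]
          rw [hmod, hdiv, e1, e2, if_neg (by omega), if_neg (by omega)]
          have hidx : (k+1) + ((s:ℕ) : Fin N) = k + (((s+1):ℕ) : Fin N) := by push_cast; ring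
          rw [hidx, etil_eq, lie_smul']
          rw [lie_off N k (k+1) (k + (((s+1):ℕ) : Fin N)) (fin_k1_ne N h3 k)
            (by have := fin_k1_ne' N h3 k (s := s+1) (by omega) hsN1; simpa using this)
            (fin_k_ne N k (s := s+1) (by omega) hsN1)]
          rw [← hTb, ← hTb', pow_succ]
          module
        · -- wrap-around case: s + 1 = N
          have hsval : s = N - 1 := by omega
          have e1 : (N*m + s + 1) % N = 0 := by
            rw [Nat.add_assoc, show s + 1 = N by omega, ← Nat.mul_add_one, Nat.mul_mod_right]
          have e2 : (N*m + s + 1) / N = m + 1 := by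
            rw [Nat.add_assoc, show s + 1 = N by omega, ← Nat.mul_add_one,
              Nat.mul_div_cancel_left _ (show 0 < N by omega)]
          simp only [Fm]
          rw [hmod, hdiv, e1, e2, if_neg (by omega), if_pos rfl]
          have hidx : (k+1) + ((s:ℕ) : Fin N) = k := by
            have h1 : (k+1) + ((s:ℕ) : Fin N) = k + (((s+1):ℕ) : Fin N) := by push_cast; ring
            rw [h1, show ((s+1:ℕ) : Fin N) = 0 by
              rw [show s+1 = N by omega]; exact Fin.natCast_self N, add_zero]
          rw [hidx, etil_eq, lie_smul']
          rw [lie_in N k (k+1) (fin_k1_ne N h3 k).symm]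
          rw [smul_smul]
          congr 1
          have hT1 : (T (aexp N k) : LaurentPolynomial ℂ) * T (bexp N (k+1) s) = T 1 := by
            rw [← T_add]
            congr 1
            have := bNm1 N h3 k
            rw [hsval]
            omega
          have hT2 : (T (-aexp N k) : LaurentPolynomial ℂ) * T (-(bexp N (k+1) s)) = T (-1) := by
            rw [← T_add]
            congr 1
            have := bNm1 N h3 k
            rw [hsval]
            omega
          have hpow : ((-1 : LaurentPolynomial ℂ))^N = -(-1)^s := by
            rw [show N = s + 1 by omega, pow_succ]; ring
          obtain _ | m := m
          · rw [show coefC N 0 = 1 from rfl, show sg 0 = -1 from rfl, one_mul]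
            rw [show coefC N 1
                = (T 1 - (-1 : LaurentPolynomial ℂ)^N * T (-1)) from by rw [coefC]; ring]
            rw [hpow, ← hT1, ← hT2]
            ring
          · rw [show sg (m+1) = 1 from rfl, show coefC N (m+1+1)
                = (T 1 - (-1 : LaurentPolynomial ℂ)^N * T (-1))
                  * (T 1 + (-1 : LaurentPolynomial ℂ)^N * T (-1))^(m+1) from rfl,
              show coefC N (m+1)
                = (T 1 - (-1 : LaurentPolynomial ℂ)^N * T (-1))
                  * (T 1 + (-1 : LaurentPolynomial ℂ)^N * T (-1))^m from rfl,
              pow_succ, hpow, ← hT1, ← hT2]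
            ring

/-- Under a Lie algebra homomorphism `π : A_N → L(sl(N))` with `π(e_i) = ẽ_i`,
the image of the closed string `S_i(Nm)` is
`(t - (-1)^N t⁻¹)(t + (-1)^N t⁻¹)^{m-1}(E_{ii} - E_{i+1,i+1})` for all `m ≥ 1`;
in particular `Σ_{i=1}^N π(S_i(Nm)) = 0`. -/
theorem image_of_closed_strings (N : ℕ) (hN : 3 ≤ N) [NeZero N]
    (π : OnsAlg N →ₗ⁅ℂ⁆ gl N) (hπ : ∀ i : Fin N, π (eGen N i) = etil N i)
    (m : ℕ) (hm : 1 ≤ m) :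
    (∀ i : Fin N,
      π (S (eGen N) (N * m) i)
        = ((((T 1 : LaurentPolynomial ℂ) - ((-1 : LaurentPolynomial ℂ) ^ N) * T (-1)) *
            ((T 1 : LaurentPolynomial ℂ) + ((-1 : LaurentPolynomial ℂ) ^ N) * T (-1)) ^ (m - 1))) •
            (Matrix.single i i (1 : LaurentPolynomial ℂ) - Matrix.single (i + 1) (i + 1) 1)) ∧
    ∑ i : Fin N, π (S (eGen N) (N * m) i) = 0 := by
  have hS : ∀ i : Fin N, π (S (eGen N) (N * m) i)
      = coefC N m • (Matrix.single i i (1 : LaurentPolynomial ℂ)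
          - Matrix.single (i+1) (i+1) (1 : LaurentPolynomial ℂ)) := by
    intro i
    rw [map_S π (eGen N) (N*m) i, show (fun j => π (eGen N j)) = etil N from funext hπ,
      Setil_eq N hN (N*m) (Nat.mul_pos (by omega) (by omega)) i]
    simp only [Fm]
    rw [Nat.mul_mod_right, Nat.mul_div_cancel_left _ (show 0 < N by omega), if_pos rfl]
  have hc : coefC N m = ((T 1 : LaurentPolynomial ℂ) - ((-1 : LaurentPolynomial ℂ)^N) * T (-1)) *
      ((T 1 : LaurentPolynomial ℂ) + ((-1 : LaurentPolynomial ℂ)^N) * T (-1)) ^ (m-1) := by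
    obtain ⟨m', rfl⟩ : ∃ m', m = m' + 1 := ⟨m-1, by omega⟩
    rw [coefC, Nat.add_sub_cancel]
  constructor
  · intro i
    rw [hS i, hc]
  · rw [Finset.sum_congr rfl (fun i _ => hS i), ← Finset.smul_sum, Finset.sum_sub_distrib]
    rw [Fintype.sum_equiv (Equiv.addRight (1 : Fin N))
      (fun i => Matrix.single (i+1) (i+1) (1 : LaurentPolynomial ℂ))
      (fun i => Matrix.single i i (1 : LaurentPolynomial ℂ)) (fun i => by simp)]
    rw [sub_self, smul_zero]
end
end
end
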